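/- Let N ≥ 2 and ρ > 0. Let U be an N×N real orthogonal matrix, V a 2×2 real orthogonal matrix, and σ₁ ≥ σ₂ ≥ 0. Let S ∈ ℝᴺˣ² be the matrix with S₁₁ = σ₁, S₂₂ = σ₂ and all other entries zero, and set J = U S V. For i = 1, 2 let λᵢ = (σᵢ + √(σᵢ² + 8ρ))/(2ρ), let Λ ∈ ℝᴺˣ² have Λ₁₁ = λ₁, Λ₂₂ = λ₂ and all other entries zero, and set X* = U Λ V. Then X*ᵀ X* is invertible, and for every X ∈ ℝᴺˣ² such that Xᵀ X is invertible, ln det((X*ᵀ X*)⁻¹) + (ρ/2) Tr(X*ᵀ X*) − Tr(Jᵀ X*) ≤ ln det((Xᵀ X)⁻¹) + (ρ/2) Tr(Xᵀ X) − Tr(Jᵀ X). That is, X* is a global minimizer of the ADMM X-subproblem objective. -/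

import Mathlib

open Matrix BigOperators

private def dmat (N : ℕ) (d : Fin 2 → ℝ) : Matrix (Fin N) (Fin 2) ℝ :=
  Matrix.of fun i j => if (i : ℕ) = (j : ℕ) then d j else 0

private lemma dmat_tmul {N : ℕ} (hN : 2 ≤ N) (d e : Fin 2 → ℝ) :
    (dmat N d)ᵀ * (dmat N e) = Matrix.diagonal (fun j => d j * e j) := by
  ext j k
  rw [Matrix.mul_apply]
  rw [Finset.sum_eq_single (⟨(j : ℕ), lt_of_lt_of_le j.2 hN⟩ : Fin N)]
  · by_cases h : j = k
    · subst h; simp [dmat, Matrix.diagonal]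
    · have h' : (j : ℕ) ≠ (k : ℕ) := fun hh => h (Fin.ext hh)
      simp [dmat, Matrix.diagonal, h, h']
  · intro i _ hi
    have h' : (i : ℕ) ≠ (j : ℕ) := by
      intro hh; exact hi (Fin.ext hh)
    simp [dmat, h']
  · intro h; exact absurd (Finset.mem_univ _) h

private lemma lam_pos {ρ σ : ℝ} (hρ : 0 < ρ) (hσ : 0 ≤ σ) :
    0 < (σ + Real.sqrt (σ ^ 2 + 8 * ρ)) / (2 * ρ) := by
  have hs : 0 < Real.sqrt (σ ^ 2 + 8 * ρ) :=
    Real.sqrt_pos.mpr (by nlinarith)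
  positivity

private lemma lam_key {ρ σ : ℝ} (hρ : 0 < ρ) (hσ : 0 ≤ σ) :
    ρ * ((σ + Real.sqrt (σ ^ 2 + 8 * ρ)) / (2 * ρ)) ^ 2 =
      σ * ((σ + Real.sqrt (σ ^ 2 + 8 * ρ)) / (2 * ρ)) + 2 := by
  have hs : Real.sqrt (σ ^ 2 + 8 * ρ) ^ 2 = σ ^ 2 + 8 * ρ :=
    Real.sq_sqrt (by nlinarith)
  field_simp
  nlinarith [hs, (show Real.sqrt (σ ^ 2 + ρ * 8) ^ 2 = σ ^ 2 + ρ * 8 by rw [mul_comm ρ 8]; exact hs)]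

/-- Scalar optimality: `h(t) = -2 log t + (ρ/2) t² - σ t` is minimized at
`λ = (σ + √(σ² + 8ρ))/(2ρ)`. -/
private lemma scalar_min {ρ σ : ℝ} (hρ : 0 < ρ) (hσ : 0 ≤ σ) {t : ℝ} (ht : 0 < t) :
    -2 * Real.log ((σ + Real.sqrt (σ ^ 2 + 8 * ρ)) / (2 * ρ)) +
        ρ / 2 * ((σ + Real.sqrt (σ ^ 2 + 8 * ρ)) / (2 * ρ)) ^ 2 -
        σ * ((σ + Real.sqrt (σ ^ 2 + 8 * ρ)) / (2 * ρ)) ≤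
      -2 * Real.log t + ρ / 2 * t ^ 2 - σ * t := by
  set l := (σ + Real.sqrt (σ ^ 2 + 8 * ρ)) / (2 * ρ) with hl_def
  have hl : 0 < l := lam_pos hρ hσ
  have key : ρ * l ^ 2 = σ * l + 2 := lam_key hρ hσ
  have h1 : Real.log t - Real.log l ≤ t / l - 1 := by
    rw [← Real.log_div ht.ne' hl.ne']
    exact Real.log_le_sub_one_of_pos (div_pos ht hl)
  have h2 : (Real.log t - Real.log l) * l ≤ t - l := by
    have := mul_le_mul_of_nonneg_right h1 hl.le
    calc (Real.log t - Real.log l) * l ≤ (t / l - 1) * l := this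
      _ = t - l := by field_simp
  have key_t : (ρ * l ^ 2 - σ * l - 2) * t = 0 := by
    rw [show ρ * l ^ 2 - σ * l - 2 = 0 by linarith]; ring
  have key_l : (ρ * l ^ 2 - σ * l - 2) * l = 0 := by
    rw [show ρ * l ^ 2 - σ * l - 2 = 0 by linarith]; ring
  nlinarith [h2, key_t, key_l, mul_nonneg (mul_nonneg hρ.le hl.le) (sq_nonneg (t - l)), hl,
    mul_pos hρ hl]

/-- Core inequality: lower bound for the objective in terms of the two
column norms, for any `N×2` matrix `Y` with invertible Gram matrix. -/
private lemma core_ineq {N : ℕ} (hN : 2 ≤ N) {ρ σ1 σ2 : ℝ} (hρ : 0 < ρ)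
    (hσ1 : 0 ≤ σ1) (hσ2 : 0 ≤ σ2)
    (Y : Matrix (Fin N) (Fin 2) ℝ) (hY : (Yᵀ * Y).det ≠ 0) :
    (-2 * Real.log ((σ1 + Real.sqrt (σ1 ^ 2 + 8 * ρ)) / (2 * ρ)) +
        ρ / 2 * ((σ1 + Real.sqrt (σ1 ^ 2 + 8 * ρ)) / (2 * ρ)) ^ 2 -
        σ1 * ((σ1 + Real.sqrt (σ1 ^ 2 + 8 * ρ)) / (2 * ρ))) +
    (-2 * Real.log ((σ2 + Real.sqrt (σ2 ^ 2 + 8 * ρ)) / (2 * ρ)) +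
        ρ / 2 * ((σ2 + Real.sqrt (σ2 ^ 2 + 8 * ρ)) / (2 * ρ)) ^ 2 -
        σ2 * ((σ2 + Real.sqrt (σ2 ^ 2 + 8 * ρ)) / (2 * ρ))) ≤
      -Real.log (Yᵀ * Y).det + ρ / 2 * (Yᵀ * Y).trace -
        (σ1 * Y ⟨0, by omega⟩ 0 + σ2 * Y ⟨1, by omega⟩ 1) := by
  set a := ∑ i, Y i 0 ^ 2 with ha_def
  set b := ∑ i, Y i 1 ^ 2 with hb_def
  set c := ∑ i, Y i 0 * Y i 1 with hc_def
  have hdet : (Yᵀ * Y).det = a * b - c * c := by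
    rw [Matrix.det_fin_two]
    simp only [Matrix.mul_apply, Matrix.transpose_apply, ha_def, hb_def, hc_def]
    congr 1
    · congr 1 <;> exact Finset.sum_congr rfl fun i _ => by ring
    · rw [show (∑ i, Y i 1 * Y i 0) = c from Finset.sum_congr rfl fun i _ => by ring,
        show (∑ i, Y i 0 * Y i 1) = c from rfl]
  have htr : (Yᵀ * Y).trace = a + b := by
    rw [Matrix.trace, Fin.sum_univ_two]
    simp only [Matrix.diag_apply, Matrix.mul_apply, Matrix.transpose_apply, ha_def, hb_def]
    congr 1 <;> exact Finset.sum_congr rfl fun i _ => by ring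
  have hcs : c ^ 2 ≤ a * b := by
    simpa [ha_def, hb_def, hc_def] using
      Finset.sum_mul_sq_le_sq_mul_sq Finset.univ (fun i => Y i 0) (fun i => Y i 1)
  have ha0 : 0 ≤ a := Finset.sum_nonneg fun i _ => sq_nonneg _
  have hb0 : 0 ≤ b := Finset.sum_nonneg fun i _ => sq_nonneg _
  have hdpos : 0 < a * b - c * c := by
    rcases lt_or_eq_of_le (by nlinarith [hcs] : c * c ≤ a * b) with h | h
    · linarith
    · exact absurd (by rw [hdet]; linarith) hY
  have ha : 0 < a := by nlinarith [mul_self_nonneg c]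
  have hb : 0 < b := by nlinarith [mul_self_nonneg c]
  set ta := Real.sqrt a with hta_def
  set tb := Real.sqrt b with htb_def
  have hta : 0 < ta := Real.sqrt_pos.mpr ha
  have htb : 0 < tb := Real.sqrt_pos.mpr hb
  have hta2 : ta ^ 2 = a := Real.sq_sqrt ha0
  have htb2 : tb ^ 2 = b := Real.sq_sqrt hb0
  -- diagonal entries bounded by column norms
  have hY00 : Y ⟨0, by omega⟩ 0 ≤ ta := by
    have h1 : Y ⟨0, by omega⟩ 0 ^ 2 ≤ a :=
      Finset.single_le_sum (fun i _ => sq_nonneg (Y i 0)) (Finset.mem_univ _)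
    calc Y ⟨0, by omega⟩ 0 ≤ |Y ⟨0, by omega⟩ 0| := le_abs_self _
      _ = Real.sqrt (Y ⟨0, by omega⟩ 0 ^ 2) := (Real.sqrt_sq_eq_abs _).symm
      _ ≤ ta := Real.sqrt_le_sqrt h1
  have hY11 : Y ⟨1, by omega⟩ 1 ≤ tb := by
    have h1 : Y ⟨1, by omega⟩ 1 ^ 2 ≤ b :=
      Finset.single_le_sum (fun i _ => sq_nonneg (Y i 1)) (Finset.mem_univ _)
    calc Y ⟨1, by omega⟩ 1 ≤ |Y ⟨1, by omega⟩ 1| := le_abs_self _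
      _ = Real.sqrt (Y ⟨1, by omega⟩ 1 ^ 2) := (Real.sqrt_sq_eq_abs _).symm
      _ ≤ tb := Real.sqrt_le_sqrt h1
  have hlog : Real.log (Yᵀ * Y).det ≤ 2 * Real.log ta + 2 * Real.log tb := by
    rw [hdet]
    calc Real.log (a * b - c * c) ≤ Real.log (a * b) :=
          Real.log_le_log hdpos (by nlinarith [mul_self_nonneg c])
      _ = Real.log a + Real.log b := Real.log_mul ha.ne' hb.ne'
      _ = 2 * Real.log ta + 2 * Real.log tb := by
          rw [← hta2, ← htb2, Real.log_pow, Real.log_pow]; push_cast; ring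
  have s1 := scalar_min hρ hσ1 hta
  have s2 := scalar_min hρ hσ2 htb
  have hb1 : σ1 * Y ⟨0, by omega⟩ 0 ≤ σ1 * ta :=
    mul_le_mul_of_nonneg_left hY00 hσ1
  have hb2 : σ2 * Y ⟨1, by omega⟩ 1 ≤ σ2 * tb :=
    mul_le_mul_of_nonneg_left hY11 hσ2
  rw [htr]
  have hA : ρ / 2 * ta ^ 2 = ρ / 2 * a := by rw [hta2]
  have hB : ρ / 2 * tb ^ 2 = ρ / 2 * b := by rw [htb2]
  linarith [s1, s2, hb1, hb2, hlog, hA, hB]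

private lemma dmat_trace {N : ℕ} (hN : 2 ≤ N) (d : Fin 2 → ℝ) (Y : Matrix (Fin N) (Fin 2) ℝ) :
    ((dmat N d)ᵀ * Y).trace = d 0 * Y ⟨0, by omega⟩ 0 + d 1 * Y ⟨1, by omega⟩ 1 := by
  rw [Matrix.trace, Fin.sum_univ_two]
  simp only [Matrix.diag_apply, Matrix.mul_apply, Matrix.transpose_apply]
  congr 1
  · rw [Finset.sum_eq_single (⟨0, by omega⟩ : Fin N)]
    · simp [dmat]
    · intro i _ hi
      have h' : (i : ℕ) ≠ 0 := by
        simpa [Fin.ext_iff] using hi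
      simp [dmat, h']
    · intro h; exact absurd (Finset.mem_univ _) h
  · rw [Finset.sum_eq_single (⟨1, by omega⟩ : Fin N)]
    · simp [dmat]
    · intro i _ hi
      have h' : (i : ℕ) ≠ 1 := by
        simpa [Fin.ext_iff] using hi
      simp [dmat, h']
    · intro h; exact absurd (Finset.mem_univ _) h

private lemma conj_det {V W : Matrix (Fin 2) (Fin 2) ℝ} (h : W * V = 1)
    (A : Matrix (Fin 2) (Fin 2) ℝ) : (V * (A * W)).det = A.det := by
  have h1 : W.det * V.det = 1 := by rw [← Matrix.det_mul, h, Matrix.det_one]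
  rw [Matrix.det_mul, Matrix.det_mul]
  calc V.det * (A.det * W.det) = A.det * (W.det * V.det) := by ring
    _ = A.det := by rw [h1, mul_one]

private lemma conj_trace {V W : Matrix (Fin 2) (Fin 2) ℝ} (h : W * V = 1)
    (A : Matrix (Fin 2) (Fin 2) ℝ) : (V * (A * W)).trace = A.trace := by
  rw [← Matrix.mul_assoc, Matrix.trace_mul_comm, ← Matrix.mul_assoc, h, Matrix.one_mul]

/-- Closed-form global minimizer of the ADMM `X`-subproblem: with
`J = U S V` an SVD (`S` the `N×2` "diagonal" matrix of singular values
`σ₁ ≥ σ₂ ≥ 0`), the matrix `X* = U Λ V` with `λᵢ = (σᵢ + √(σᵢ² + 8ρ))/(2ρ)`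
has `X*ᵀX*` invertible and globally minimizes
`ln det((XᵀX)⁻¹) + (ρ/2) Tr(XᵀX) − Tr(JᵀX)` over all `X` with `XᵀX` invertible. -/
theorem admm_X_update_global_min {N : ℕ} (hN : 2 ≤ N) (ρ : ℝ) (hρ : 0 < ρ)
    (U : Matrix (Fin N) (Fin N) ℝ) (hU : Uᵀ * U = 1)
    (V : Matrix (Fin 2) (Fin 2) ℝ) (hV : Vᵀ * V = 1)
    (σ1 σ2 : ℝ) (hσ : σ1 ≥ σ2) (hσ2 : 0 ≤ σ2) :
    let S : Matrix (Fin N) (Fin 2) ℝ :=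
      Matrix.of fun i j => if (i : ℕ) = (j : ℕ) then ![σ1, σ2] j else 0
    let J : Matrix (Fin N) (Fin 2) ℝ := U * S * V
    let lam : Fin 2 → ℝ :=
      fun i => ((![σ1, σ2] i) + Real.sqrt ((![σ1, σ2] i) ^ 2 + 8 * ρ)) / (2 * ρ)
    let Λ : Matrix (Fin N) (Fin 2) ℝ :=
      Matrix.of fun i j => if (i : ℕ) = (j : ℕ) then lam j else 0
    let Xstar : Matrix (Fin N) (Fin 2) ℝ := U * Λ * V
    IsUnit (Xstarᵀ * Xstar) ∧
    ∀ X : Matrix (Fin N) (Fin 2) ℝ, IsUnit (Xᵀ * X) →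
      Real.log ((Xstarᵀ * Xstar)⁻¹).det + ρ / 2 * (Xstarᵀ * Xstar).trace -
          (Jᵀ * Xstar).trace ≤
        Real.log ((Xᵀ * X)⁻¹).det + ρ / 2 * (Xᵀ * X).trace - (Jᵀ * X).trace := by
  intro S J lam Λ Xstar
  have hσ1 : 0 ≤ σ1 := le_trans hσ2 hσ
  have hvv : V * Vᵀ = 1 := mul_eq_one_comm.mp hV
  have huu : U * Uᵀ = 1 := mul_eq_one_comm.mp hU
  have hcanU : ∀ (M : Matrix (Fin N) (Fin 2) ℝ), Uᵀ * (U * M) = M := fun M => by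
    rw [← Matrix.mul_assoc, hU, Matrix.one_mul]
  have hcanU' : ∀ (M : Matrix (Fin N) (Fin 2) ℝ), U * (Uᵀ * M) = M := fun M => by
    rw [← Matrix.mul_assoc, huu, Matrix.one_mul]
  have hlam0 : lam 0 = (σ1 + Real.sqrt (σ1 ^ 2 + 8 * ρ)) / (2 * ρ) := by
    show ((![σ1, σ2] 0) + Real.sqrt ((![σ1, σ2] 0) ^ 2 + 8 * ρ)) / (2 * ρ) = _
    norm_num
  have hlam1 : lam 1 = (σ2 + Real.sqrt (σ2 ^ 2 + 8 * ρ)) / (2 * ρ) := by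
    show ((![σ1, σ2] 1) + Real.sqrt ((![σ1, σ2] 1) ^ 2 + 8 * ρ)) / (2 * ρ) = _
    norm_num
  have hlam0p : 0 < lam 0 := hlam0 ▸ lam_pos hρ hσ1
  have hlam1p : 0 < lam 1 := hlam1 ▸ lam_pos hρ hσ2
  have hLL : Λᵀ * Λ = Matrix.diagonal (fun j => lam j * lam j) := dmat_tmul hN lam lam
  have hSL : Sᵀ * Λ = Matrix.diagonal (fun j => ![σ1, σ2] j * lam j) :=
    dmat_tmul hN ![σ1, σ2] lam
  have hXs : Xstarᵀ * Xstar = Vᵀ * (Matrix.diagonal (fun j => lam j * lam j) * V) := by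
    show (U * Λ * V)ᵀ * (U * Λ * V) = _
    calc (U * Λ * V)ᵀ * (U * Λ * V) = Vᵀ * (Λᵀ * (Uᵀ * (U * (Λ * V)))) := by
          simp only [Matrix.transpose_mul, Matrix.mul_assoc]
      _ = Vᵀ * (Λᵀ * (Λ * V)) := by rw [hcanU]
      _ = Vᵀ * ((Λᵀ * Λ) * V) := by rw [Matrix.mul_assoc]
      _ = _ := by rw [hLL]
  have hdetXs : (Xstarᵀ * Xstar).det = (lam 0 * lam 0) * (lam 1 * lam 1) := by
    rw [hXs, conj_det hvv, Matrix.det_diagonal, Fin.prod_univ_two]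
  have htrXs : (Xstarᵀ * Xstar).trace = lam 0 * lam 0 + lam 1 * lam 1 := by
    rw [hXs, conj_trace hvv, Matrix.trace_diagonal, Fin.sum_univ_two]
  have hJXs : (Jᵀ * Xstar).trace = σ1 * lam 0 + σ2 * lam 1 := by
    have h1 : Jᵀ * Xstar = Vᵀ * (Matrix.diagonal (fun j => ![σ1, σ2] j * lam j) * V) := by
      show (U * S * V)ᵀ * (U * Λ * V) = _
      calc (U * S * V)ᵀ * (U * Λ * V) = Vᵀ * (Sᵀ * (Uᵀ * (U * (Λ * V)))) := by
            simp only [Matrix.transpose_mul, Matrix.mul_assoc]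
        _ = Vᵀ * (Sᵀ * (Λ * V)) := by rw [hcanU]
        _ = Vᵀ * ((Sᵀ * Λ) * V) := by rw [Matrix.mul_assoc]
        _ = _ := by rw [hSL]
    rw [h1, conj_trace hvv, Matrix.trace_diagonal, Fin.sum_univ_two]
    norm_num
  have hunit : IsUnit (Xstarᵀ * Xstar) := by
    rw [Matrix.isUnit_iff_isUnit_det, isUnit_iff_ne_zero, hdetXs]
    exact ne_of_gt (mul_pos (mul_pos hlam0p hlam0p) (mul_pos hlam1p hlam1p))
  refine ⟨hunit, ?_⟩
  intro X hX
  set Y := Uᵀ * (X * Vᵀ) with hY_def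
  have hYY : Yᵀ * Y = V * ((Xᵀ * X) * Vᵀ) := by
    calc Yᵀ * Y = V * (Xᵀ * (U * (Uᵀ * (X * Vᵀ)))) := by
          simp only [hY_def, Matrix.transpose_mul, Matrix.mul_assoc, Matrix.transpose_transpose]
      _ = V * (Xᵀ * (X * Vᵀ)) := by rw [hcanU']
      _ = V * ((Xᵀ * X) * Vᵀ) := by rw [Matrix.mul_assoc]
  have hdetY : (Yᵀ * Y).det = (Xᵀ * X).det := by rw [hYY, conj_det hV]
  have htrY : (Yᵀ * Y).trace = (Xᵀ * X).trace := by rw [hYY, conj_trace hV]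
  have hJX : (Jᵀ * X).trace =
      σ1 * Y ⟨0, by omega⟩ 0 + σ2 * Y ⟨1, by omega⟩ 1 := by
    have h1 : Jᵀ * X = Vᵀ * (Sᵀ * (Uᵀ * X)) := by
      show (U * S * V)ᵀ * X = _
      simp only [Matrix.transpose_mul, Matrix.mul_assoc]
    rw [h1, Matrix.trace_mul_comm]
    have h2 : Sᵀ * (Uᵀ * X) * Vᵀ = Sᵀ * Y := by
      simp only [hY_def, Matrix.mul_assoc]
    rw [h2]
    have h3 := dmat_trace hN ![σ1, σ2] Y
    rw [show (Sᵀ * Y).trace = ((dmat N ![σ1, σ2])ᵀ * Y).trace from rfl, h3]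
    norm_num
  have hdet_ne : (Yᵀ * Y).det ≠ 0 := by
    rw [hdetY]
    rw [Matrix.isUnit_iff_isUnit_det, isUnit_iff_ne_zero] at hX
    exact hX
  have core := core_ineq hN hρ hσ1 hσ2 Y hdet_ne
  have hloginv : ∀ (A : Matrix (Fin 2) (Fin 2) ℝ), Real.log (A⁻¹).det = -Real.log A.det := by
    intro A; rw [Matrix.det_nonsing_inv, Ring.inverse_eq_inv', Real.log_inv]
  rw [hloginv, hloginv, hdetXs, htrXs, hJXs, ← hdetY, ← htrY, hJX]
  have hloglam : Real.log ((lam 0 * lam 0) * (lam 1 * lam 1)) =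
      2 * Real.log (lam 0) + 2 * Real.log (lam 1) := by
    rw [Real.log_mul (by positivity) (by positivity), Real.log_mul hlam0p.ne' hlam0p.ne',
      Real.log_mul hlam1p.ne' hlam1p.ne']
    ring
  rw [hloglam, hlam0, hlam1]
  linarith [core]
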